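/- Let Φ be an irreducible reduced root system with a Weyl-group-invariant positive definite inner product (·,·), let α, γ be positive roots with γ − α a nonzero sum of simple roots with non-negative coefficients. Then there exists a simple root δ occurring with positive coefficient in γ − α such that either α + δ ∈ Φ or γ − δ ∈ Φ. -/

import Mathlib

open Finset

/-- A (concrete) reduced root system in a real inner ℝ product space, with a fixed base `Δ`
of simple roots and the integer coefficient function of roots with respect to the base. -/
structure RootSystemData (V : Type*) [NormedAddCommGroup V] [InnerProductSpace ℝ V] where
  /-- the finite set of roots -/
  Φ : Finset V
  /-- the base of simple roots -/
  Δ : Finset V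
  nonempty : Φ.Nonempty
  Δ_subset : Δ ⊆ Φ
  zero_not_mem : (0 : V) ∉ Φ
  /-- `coeff α δ` is the coefficient of the simple root `δ` in `α` -/
  coeff : V → V → ℤ
  root_eq_sum : ∀ α ∈ Φ, α = ∑ δ ∈ Δ, (coeff α δ : ℝ) • δ
  coeff_sign : ∀ α ∈ Φ, (∀ δ ∈ Δ, 0 ≤ coeff α δ) ∨ (∀ δ ∈ Δ, coeff α δ ≤ 0)
  coeff_self : ∀ δ ∈ Δ, coeff δ δ = 1
  coeff_ne : ∀ δ ∈ Δ, ∀ δ' ∈ Δ, δ ≠ δ' → coeff δ δ' = 0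
  linIndep : LinearIndependent ℝ (fun δ : ↥Δ => (δ : V))
  neg_mem : ∀ α ∈ Φ, -α ∈ Φ
  reduced : ∀ α ∈ Φ, ∀ t : ℝ, t • α ∈ Φ → t = 1 ∨ t = -1
  /-- the integer Cartan pairing `⟨α, β^∨⟩` -/
  cartan : V → V → ℤ
  cartan_eq : ∀ α ∈ Φ, ∀ β ∈ Φ, (cartan α β : ℝ) * (inner ℝ β β : ℝ) = 2 * (inner ℝ α β : ℝ)
  reflect_mem : ∀ α ∈ Φ, ∀ β ∈ Φ, α - (cartan α β : ℝ) • β ∈ Φ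
  irreducible : ∀ S ⊆ Φ, (∀ α ∈ S, ∀ β ∈ Φ, β ∉ S → (inner ℝ α β : ℝ) = 0) → S = ∅ ∨ S = Φ

namespace RootSystemData

variable {V : Type*} [NormedAddCommGroup V] [InnerProductSpace ℝ V] (R : RootSystemData V)

/-- The height of a root: the sum of its coefficients over the base. -/
def ht (α : V) : ℤ := ∑ δ ∈ R.Δ, R.coeff α δ

/-- `α` is a positive root. -/
def IsPos (α : V) : Prop := α ∈ R.Φ ∧ ∀ δ ∈ R.Δ, 0 ≤ R.coeff α δ

/-- The set of positive roots. -/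
def posRoots : Finset V := R.Φ.filter (fun α => ∀ δ ∈ R.Δ, 0 ≤ R.coeff α δ)

/-- The set of negative roots. -/
def negRoots : Finset V := R.Φ.filter (fun α => ∀ δ ∈ R.Δ, R.coeff α δ ≤ 0)

/-- The Coxeter number `h = 1 + max height`. -/
def coxeter : ℤ := 1 + R.Φ.sup' R.nonempty R.ht

/-- The dominance order: `γ - α` is a nonnegative combination of simple roots. -/
def le (α γ : V) : Prop := ∀ δ ∈ R.Δ, R.coeff α δ ≤ R.coeff γ δ

/-- Strict dominance order. -/
def lt (α γ : V) : Prop := R.le α γ ∧ α ≠ γ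

/-- `Φ_k`: the roots of height congruent to `k` modulo the Coxeter number. -/
def phiMod (k : ℤ) : Finset V := R.Φ.filter (fun γ => R.ht γ % R.coxeter = k % R.coxeter)

end RootSystemData


section Aux

variable {V : Type*} [NormedAddCommGroup V] [InnerProductSpace ℝ V]

/-- Coefficients with respect to the base are unique. -/
lemma inner_self_pos' {x : V} (hx : x ≠ 0) : (0:ℝ) < inner ℝ x x :=
  lt_of_not_ge (fun h => hx (real_inner_self_nonpos.mp h))

lemma RootSystemData.coeff_ext (R : RootSystemData V) {c d : V → ℝ}
    (h : ∑ δ ∈ R.Δ, c δ • δ = ∑ δ ∈ R.Δ, d δ • δ) : ∀ δ ∈ R.Δ, c δ = d δ := by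
  have h0 : ∑ x ∈ R.Δ.attach, (c (x : V) - d (x : V)) • (x : V) = 0 := by
    have hc : ∑ x ∈ R.Δ.attach, c (x : V) • (x : V) = ∑ δ ∈ R.Δ, c δ • δ :=
      Finset.sum_attach R.Δ (fun δ => c δ • δ)
    have hd : ∑ x ∈ R.Δ.attach, d (x : V) • (x : V) = ∑ δ ∈ R.Δ, d δ • δ :=
      Finset.sum_attach R.Δ (fun δ => d δ • δ)
    simp only [sub_smul, Finset.sum_sub_distrib, hc, hd, h, sub_self]
  intro δ hδ
  have := linearIndependent_iff'.mp R.linIndep R.Δ.attach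
    (fun x => c (x : V) - d (x : V)) h0 ⟨δ, hδ⟩ (Finset.mem_attach _ _)
  simpa [sub_eq_zero] using this

/-- If two roots have positive inner ℝ product and are distinct, their difference is a root. -/
lemma RootSystemData.sub_mem_of_inner_pos (R : RootSystemData V) {a b : V}
    (ha : a ∈ R.Φ) (hb : b ∈ R.Φ) (hip : (0:ℝ) < inner ℝ a b) (hne : a ≠ b) :
    a - b ∈ R.Φ := by
  have ha0 : a ≠ 0 := fun h => R.zero_not_mem (h ▸ ha)
  have hb0 : b ≠ 0 := fun h => R.zero_not_mem (h ▸ hb)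
  have haa : (0:ℝ) < inner ℝ a a := inner_self_pos' ha0
  have hbb : (0:ℝ) < inner ℝ b b := inner_self_pos' hb0
  have hcab := R.cartan_eq a ha b hb
  have hcba := R.cartan_eq b hb a ha
  have hsymm : (inner ℝ b a : ℝ) = inner ℝ a b := real_inner_comm a b
  have hca : (1:ℤ) ≤ R.cartan a b := by
    have : (0:ℝ) < (R.cartan a b : ℝ) := by nlinarith
    exact_mod_cast this
  have hcb : (1:ℤ) ≤ R.cartan b a := by
    have : (0:ℝ) < (R.cartan b a : ℝ) := by nlinarith
    exact_mod_cast this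
  -- `a` and `b` are not proportional
  have hlt : (inner ℝ a b : ℝ) < ‖a‖ * ‖b‖ := by
    rw [inner_lt_norm_mul_iff_real]
    intro hdep
    have hnb : (0:ℝ) < ‖b‖ := norm_pos_iff.mpr hb0
    have hna : (0:ℝ) < ‖a‖ := norm_pos_iff.mpr ha0
    have hab : (‖a‖ / ‖b‖) • b = a := by
      rw [div_eq_mul_inv, mul_comm, mul_smul, ← hdep, inv_smul_smul₀ (ne_of_gt hnb)]
    have ht := R.reduced b hb (‖a‖ / ‖b‖) (by rw [hab]; exact ha)
    have hpos : (0:ℝ) < ‖a‖ / ‖b‖ := by positivity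
    rcases ht with h1 | h1
    · rw [h1, one_smul] at hab; exact hne hab.symm
    · rw [h1] at hpos; norm_num at hpos
  have hsq : (inner ℝ a b : ℝ) * inner ℝ a b < inner ℝ a a * inner ℝ b b := by
    have h1 : (inner ℝ a b : ℝ) * inner ℝ a b < (‖a‖ * ‖b‖) * (‖a‖ * ‖b‖) := by nlinarith
    have h2 : (‖a‖ * ‖b‖) * (‖a‖ * ‖b‖) = inner ℝ a a * inner ℝ b b := by
      rw [real_inner_self_eq_norm_mul_norm, real_inner_self_eq_norm_mul_norm]; ring
    linarith [h2 ▸ h1]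
  have hprod : (R.cartan a b : ℝ) * (R.cartan b a : ℝ) < 4 := by nlinarith
  have hone : R.cartan a b = 1 ∨ R.cartan b a = 1 := by
    by_contra hc
    push_neg at hc
    have h2a : (2:ℤ) ≤ R.cartan a b := lt_of_le_of_ne hca (Ne.symm hc.1)
    have h2b : (2:ℤ) ≤ R.cartan b a := lt_of_le_of_ne hcb (Ne.symm hc.2)
    have h4 : (4:ℤ) ≤ R.cartan a b * R.cartan b a := by nlinarith
    have : (4:ℝ) ≤ (R.cartan a b : ℝ) * (R.cartan b a : ℝ) := by exact_mod_cast h4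
    linarith
  rcases hone with h1 | h1
  · have := R.reflect_mem a ha b hb
    rw [h1] at this
    simpa using this
  · have := R.reflect_mem b hb a ha
    rw [h1] at this
    simp only [Int.cast_one, one_smul] at this
    have := R.neg_mem _ this
    rwa [neg_sub] at this

end Aux

open RootSystemData in
/-- If `α, γ` are positive roots with `γ - α` a nonzero nonnegative combination
of simple roots, then some simple root `δ` occurring with positive coefficient in `γ - α`
satisfies `α + δ ∈ Φ` or `γ - δ ∈ Φ`. -/
theorem exists_simple_root_add_or_sub_mem
    {V : Type*} [NormedAddCommGroup V] [InnerProductSpace ℝ V]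
    (R : RootSystemData V) (α γ : V) (hα : R.IsPos α) (hγ : R.IsPos γ)
    (hle : R.le α γ) (hne : α ≠ γ) :
    ∃ δ ∈ R.Δ, R.coeff α δ < R.coeff γ δ ∧ (α + δ ∈ R.Φ ∨ γ - δ ∈ R.Φ) := by
  by_contra hcon
  push_neg at hcon
  obtain ⟨hαΦ, hαpos⟩ := hα
  obtain ⟨hγΦ, hγpos⟩ := hγ
  have hαsum := R.root_eq_sum α hαΦ
  have hγsum := R.root_eq_sum γ hγΦ
  -- key pointwise facts: for any `δ` with a strictly larger coefficient in `γ`,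
  -- `⟪α, δ⟫ ≥ 0` and `⟪γ, δ⟫ ≤ 0`
  have key : ∀ δ ∈ R.Δ, R.coeff α δ < R.coeff γ δ →
      (0:ℝ) ≤ inner ℝ α δ ∧ (inner ℝ γ δ : ℝ) ≤ 0 := by
    intro δ hδ hlt
    obtain ⟨hadd, hsub⟩ := hcon δ hδ hlt
    have hδΦ : δ ∈ R.Φ := R.Δ_subset hδ
    have hδsum := R.root_eq_sum δ hδΦ
    constructor
    · by_contra hneg
      push_neg at hneg
      have hmemneg : -δ ∈ R.Φ := R.neg_mem δ hδΦ
      have hip : (0:ℝ) < inner ℝ α (-δ) := by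
        rw [inner_neg_right]; linarith
      have hne' : α ≠ -δ := by
        intro h
        have hns : ∑ δ' ∈ R.Δ, (-(R.coeff δ δ' : ℝ)) • δ'
            = -∑ δ' ∈ R.Δ, ((R.coeff δ δ' : ℝ)) • δ' := by
          simp [neg_smul]
        have heq : ∑ δ' ∈ R.Δ, ((R.coeff α δ' : ℝ)) • δ'
            = ∑ δ' ∈ R.Δ, (-(R.coeff δ δ' : ℝ)) • δ' := by
          rw [hns, ← hαsum, ← hδsum, h]
        have h2 := R.coeff_ext heq δ hδ
        have h3 : R.coeff α δ = -(R.coeff δ δ) := by exact_mod_cast h2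
        rw [R.coeff_self δ hδ] at h3
        have hnn := hαpos δ hδ
        omega
      have := R.sub_mem_of_inner_pos hαΦ hmemneg hip hne'
      rw [sub_neg_eq_add] at this
      exact hadd this
    · by_contra hpos
      push_neg at hpos
      have hne' : γ ≠ δ := by
        intro h
        -- then γ = δ forces α = 0
        have hcoe : ∀ δ' ∈ R.Δ, (R.coeff γ δ' : ℝ) = (R.coeff δ δ' : ℝ) := by
          apply R.coeff_ext
          rw [← hγsum, ← hδsum, h]
        have hαzero : ∀ δ' ∈ R.Δ, R.coeff α δ' = 0 := by
          intro δ' hδ'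
          have hle' := hle δ' hδ'
          have hnn := hαpos δ' hδ'
          have hc1 : R.coeff γ δ' = R.coeff δ δ' := by exact_mod_cast hcoe δ' hδ'
          by_cases hδδ' : δ = δ'
          · subst hδδ'
            have h1 := R.coeff_self δ hδ
            omega
          · have h2 := R.coeff_ne δ hδ δ' hδ' hδδ'
            omega
        have : α = 0 := by
          rw [hαsum]
          apply Finset.sum_eq_zero
          intro δ' hδ'
          rw [hαzero δ' hδ']
          simp
        exact R.zero_not_mem (this ▸ hαΦ)
      have := R.sub_mem_of_inner_pos hγΦ hδΦ hpos hne'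
      exact hsub this
  -- now compute `⟪γ - α, γ - α⟫ ≤ 0`, a contradiction
  set β := γ - α with hβdef
  have hβ0 : β ≠ 0 := sub_ne_zero.mpr (Ne.symm hne)
  have hββ : (0:ℝ) < inner ℝ β β := inner_self_pos' hβ0
  have hβsum : β = ∑ δ ∈ R.Δ, ((R.coeff γ δ - R.coeff α δ : ℤ) : ℝ) • δ := by
    rw [hβdef]
    conv_lhs => rw [hγsum, hαsum]
    rw [← Finset.sum_sub_distrib]
    apply Finset.sum_congr rfl
    intro δ hδ
    push_cast
    try rw [sub_smul]
  have hcalc : (inner ℝ β β : ℝ)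
      = ∑ δ ∈ R.Δ, ((R.coeff γ δ - R.coeff α δ : ℤ) : ℝ) * inner ℝ β δ := by
    conv_lhs => rw [show (inner ℝ β β : ℝ) = inner ℝ β (∑ δ ∈ R.Δ,
      ((R.coeff γ δ - R.coeff α δ : ℤ) : ℝ) • δ) from by rw [← hβsum]]
    rw [inner_sum]
    apply Finset.sum_congr rfl
    intro δ hδ
    rw [real_inner_smul_right]
  have hle0 : (inner ℝ β β : ℝ) ≤ 0 := by
    rw [hcalc]
    apply Finset.sum_nonpos
    intro δ hδ
    rcases eq_or_lt_of_le (hle δ hδ) with heq | hlt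
    · rw [← heq]
      simp
    · obtain ⟨h1, h2⟩ := key δ hδ hlt
      have hc : (0:ℝ) ≤ ((R.coeff γ δ - R.coeff α δ : ℤ) : ℝ) := by
        have : (0:ℤ) ≤ R.coeff γ δ - R.coeff α δ := by omega
        exact_mod_cast this
      have hβδ : (inner ℝ β δ : ℝ) ≤ 0 := by
        rw [hβdef, inner_sub_left]
        linarith
      exact mul_nonpos_of_nonneg_of_nonpos hc hβδ
  linarith
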